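/- For every N ≥ 2, every KC-PMI P on N parties, and every subsystem Y ⊆ ⟦N⟧ with |Y| ≥ 2: β(Y) is positive and non-essential if and only if |Y| > 2 and the sub-hypergraph H_Y of the correlation hypergraph H_P is connected. -/
import Mathlib


namespace HEC

/-- The parties `⟦N⟧ = {0,1,…,N}`, where `0` is the purifier. -/
abbrev Party (N : ℕ) := Fin (N + 1)

/-- A collection of parties. -/
abbrev PSet (N : ℕ) := Finset (Party N)

/-- MI instances: unordered pairs of subsets of parties. -/
abbrev MI (N : ℕ) := Sym2 (PSet N)

/-- `m` is an MI instance, i.e. an unordered pair of disjoint nonempty subsets of `⟦N⟧`. -/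
def IsMIInst {N : ℕ} (m : MI N) : Prop :=
  ∃ Y Z : PSet N, m = s(Y, Z) ∧ Y.Nonempty ∧ Z.Nonempty ∧ Disjoint Y Z

/-- The MI-poset order: `{Y,Z} ⪯ {Y',Z'}` iff (`Y ⊆ Y'` and `Z ⊆ Z'`) or
(`Y ⊆ Z'` and `Z ⊆ Y'`).  (The two cases are absorbed by the existential over
representatives of the unordered pairs.) -/
def MIle {N : ℕ} (m m' : MI N) : Prop :=
  ∃ Y Z Y' Z' : PSet N, m = s(Y, Z) ∧ m' = s(Y', Z') ∧ Y ⊆ Y' ∧ Z ⊆ Z'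

/-- An `N`-party entropy vector, extended to all subsets of `⟦N⟧` by the purification
convention: `S ∅ = 0` and `S Y = S (⟦N⟧ \ Y)` whenever `0 ∈ Y`. -/
structure EntropyVec (N : ℕ) where
  S : PSet N → ℝ
  S_empty : S ∅ = 0
  S_purify : ∀ Y : PSet N, (0 : Party N) ∈ Y → S Y = S (Finset.univ \ Y)

/-- Mutual information `I(Y:Z) = S_Y + S_Z - S_{Y∪Z}`. -/
def EntropyVec.I {N : ℕ} (v : EntropyVec N) (Y Z : PSet N) : ℝ :=
  v.S Y + v.S Z - v.S (Y ∪ Z)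

/-- Membership in the subadditivity cone: `I(Y:Z) ≥ 0` for every MI instance. -/
def EntropyVec.InSAC {N : ℕ} (v : EntropyVec N) : Prop :=
  ∀ Y Z : PSet N, Y.Nonempty → Z.Nonempty → Disjoint Y Z → 0 ≤ v.I Y Z

/-- The pattern of marginal independence of `v`: the MI instances vanishing on `v`. -/
def EntropyVec.PMI {N : ℕ} (v : EntropyVec N) : Set (MI N) :=
  {m | ∃ Y Z : PSet N, m = s(Y, Z) ∧ Y.Nonempty ∧ Z.Nonempty ∧ Disjoint Y Z ∧ v.I Y Z = 0}

/-- `P` is a down-set in the MI-poset. -/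
def IsMIDownSet {N : ℕ} (P : Set (MI N)) : Prop :=
  ∀ m m' : MI N, IsMIInst m → m' ∈ P → MIle m m' → m ∈ P

/-- `P` is a KC-PMI: the PMI of some entropy vector in the subadditivity cone,
which moreover is a down-set in the MI-poset. -/
def IsKCPMI {N : ℕ} (P : Set (MI N)) : Prop :=
  (∃ v : EntropyVec N, v.InSAC ∧ P = v.PMI) ∧ IsMIDownSet P

/-- The β-set of `X`: all MI instances `{Y,Z}` with `Y ∪ Z = X`. -/
def betaSet {N : ℕ} (X : PSet N) : Set (MI N) :=
  {m | ∃ Y Z : PSet N, m = s(Y, Z) ∧ Y.Nonempty ∧ Z.Nonempty ∧ Disjoint Y Z ∧ Y ∪ Z = X}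

/-- The antichain `A` of minimal elements of `P̄ = M_N ∖ P`. -/
def minimalMI {N : ℕ} (P : Set (MI N)) : Set (MI N) :=
  {m | IsMIInst m ∧ m ∉ P ∧ ∀ m' : MI N, IsMIInst m' → m' ∉ P → MIle m' m → m' = m}

/-- `β(X)` is positive: `β(X) ⊆ P̄`. -/
def BPos {N : ℕ} (P : Set (MI N)) (X : PSet N) : Prop :=
  ∀ m ∈ betaSet X, m ∉ P

/-- `β(X)` is vanishing: `β(X) ⊆ P`. -/
def BVan {N : ℕ} (P : Set (MI N)) (X : PSet N) : Prop :=
  betaSet X ⊆ P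

/-- `β(X)` is partial: it has elements both in `P` and in `P̄`. -/
def BPart {N : ℕ} (P : Set (MI N)) (X : PSet N) : Prop :=
  (∃ m ∈ betaSet X, m ∈ P) ∧ (∃ m ∈ betaSet X, m ∉ P)

/-- `β(X)` is essential: `β(X) ∩ A ≠ ∅`. -/
def BEss {N : ℕ} (P : Set (MI N)) (X : PSet N) : Prop :=
  ∃ m ∈ betaSet X, m ∈ minimalMI P

/-- `β(X)` is completely essential: `β(X) ⊆ A`. -/
def BCEss {N : ℕ} (P : Set (MI N)) (X : PSet N) : Prop :=
  betaSet X ⊆ minimalMI P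

/-- `β(X)` is non-essential: `β(X) ∩ A = ∅`. -/
def BNEss {N : ℕ} (P : Set (MI N)) (X : PSet N) : Prop :=
  ∀ m ∈ betaSet X, m ∉ minimalMI P

/-- `pos_<(Y)`: the proper subsystems `Z ⊊ Y` with `|Z| ≥ 2` and `β(Z)` positive. -/
def posBelow {N : ℕ} (P : Set (MI N)) (Y : PSet N) : Set (PSet N) :=
  {Z | Z ⊂ Y ∧ 2 ≤ Z.card ∧ BPos P Z}

/-- `Max(pos_<(Y))`: the inclusion-maximal elements of `pos_<(Y)`. -/
def maxPosBelow {N : ℕ} (P : Set (MI N)) (Y : PSet N) : Set (PSet N) :=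
  {Z | Z ∈ posBelow P Y ∧ ∀ Z' ∈ posBelow P Y, Z ⊆ Z' → Z = Z'}

/-- The MI instance `m = {Y,Z}` splits `X` if `X ∩ Y ≠ ∅` and `X ∩ Z ≠ ∅`. -/
def Splits {N : ℕ} (m : MI N) (X : PSet N) : Prop :=
  ∃ Y Z : PSet N, m = s(Y, Z) ∧ (X ∩ Y).Nonempty ∧ (X ∩ Z).Nonempty

/-- The hyperedges of the correlation hypergraph `H_P`: one hyperedge `e_X` for each
`X ⊆ ⟦N⟧` (with `|X| ≥ 2`) whose β-set is positive.  Vertices `v_ℓ` are identified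
with the parties `ℓ ∈ ⟦N⟧`, and hyperedges with the corresponding subsystems. -/
def Hedge {N : ℕ} (P : Set (MI N)) : Set (PSet N) :=
  {X | 2 ≤ X.card ∧ BPos P X}

/-- The hyperedges of the sub-hypergraph `H_Y`: the hyperedges `e_Z` with `Z ⊊ Y`. -/
def subEdges {N : ℕ} (P : Set (MI N)) (Y : PSet N) : Set (PSet N) :=
  {Z | Z ⊂ Y ∧ Z ∈ Hedge P}

/-- One step in a hypergraph with hyperedge set `E`: `a` and `b` lie in a common
hyperedge. -/
def hStep {N : ℕ} (E : Set (PSet N)) (a b : Party N) : Prop :=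
  ∃ e ∈ E, a ∈ e ∧ b ∈ e

/-- Connectivity of the hypergraph with vertex set `V` and hyperedge set `E`:
every two vertices are joined by a path (a one-vertex hypergraph is connected). -/
def hConn {N : ℕ} (V : PSet N) (E : Set (PSet N)) : Prop :=
  ∀ a ∈ V, ∀ b ∈ V, Relation.ReflTransGen (hStep E) a b

/-- The vertex set of the connected component of `a` in the hypergraph with
vertex set `V` and hyperedge set `E`. -/
def hComp {N : ℕ} (V : PSet N) (E : Set (PSet N)) (a : Party N) : Set (Party N) :=
  {b | b ∈ V ∧ Relation.ReflTransGen (hStep E) a b}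

/-- A clique of the line graph `L_{H_P}`: a set of hyperedges of `H_P` which are
pairwise adjacent (distinct hyperedges being adjacent iff they intersect). -/
def IsLineClique {N : ℕ} (P : Set (MI N)) (Q : Set (PSet N)) : Prop :=
  Q ⊆ Hedge P ∧ ∀ e ∈ Q, ∀ f ∈ Q, e ≠ f → (e ∩ f).Nonempty

/-- A max-clique of the line graph `L_{H_P}`: a (nonempty) clique which is maximal
under inclusion. -/
def IsMaxClique {N : ℕ} (P : Set (MI N)) (Q : Set (PSet N)) : Prop :=
  Q.Nonempty ∧ IsLineClique P Q ∧ ∀ Q' : Set (PSet N), IsLineClique P Q' → Q ⊆ Q' → Q = Q'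

/-- `Q^∩`: the intersection of the hyperedges in `Q`, viewed as sets of vertices. -/
def qInter {N : ℕ} (Q : Set (PSet N)) : Set (Party N) :=
  {ℓ | ∀ e ∈ Q, ℓ ∈ e}

/-! ### Auxiliary lemmas -/

lemma I_symm {N : ℕ} (v : EntropyVec N) (A B : PSet N) : v.I A B = v.I B A := by
  unfold EntropyVec.I; rw [Finset.union_comm]; ring

lemma I_empty_left {N : ℕ} (v : EntropyVec N) (B : PSet N) : v.I ∅ B = 0 := by
  unfold EntropyVec.I; rw [Finset.empty_union, v.S_empty]; ring

lemma I_empty_right {N : ℕ} (v : EntropyVec N) (B : PSet N) : v.I B ∅ = 0 := by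
  unfold EntropyVec.I; rw [Finset.union_empty, v.S_empty]; ring

lemma I_nonneg {N : ℕ} {v : EntropyVec N} (hv : v.InSAC) {U W : PSet N}
    (h : Disjoint U W) : 0 ≤ v.I U W := by
  rcases U.eq_empty_or_nonempty with rfl | hU
  · rw [I_empty_left]
  rcases W.eq_empty_or_nonempty with rfl | hW
  · rw [I_empty_right]
  exact hv U W hU hW h

lemma mem_P_iff {N : ℕ} {P : Set (MI N)} {v : EntropyVec N}
    (hPv : P = v.PMI) {A B : PSet N}
    (hA : A.Nonempty) (hB : B.Nonempty) (hAB : Disjoint A B) :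
    s(A, B) ∈ P ↔ v.I A B = 0 := by
  constructor
  · intro h
    rw [hPv] at h
    obtain ⟨Y, Z, hm, _, _, _, hI⟩ := h
    rcases Sym2.eq_iff.mp hm with ⟨rfl, rfl⟩ | ⟨rfl, rfl⟩
    · exact hI
    · rw [I_symm]; exact hI
  · intro h; rw [hPv]; exact ⟨A, B, rfl, hA, hB, hAB, h⟩

lemma not_mem_P_iff {N : ℕ} {P : Set (MI N)} {v : EntropyVec N}
    (hv : v.InSAC) (hPv : P = v.PMI) {A B : PSet N}
    (hA : A.Nonempty) (hB : B.Nonempty) (hAB : Disjoint A B) :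
    s(A, B) ∉ P ↔ 0 < v.I A B := by
  rw [mem_P_iff hPv hA hB hAB]
  have h0 := hv A B hA hB hAB
  constructor
  · intro h; exact lt_of_le_of_ne h0 (Ne.symm h)
  · intro h h'; linarith

lemma mem_P_down {N : ℕ} {P : Set (MI N)} (hds : IsMIDownSet P)
    {A B A' B' : PSet N} (h : s(A, B) ∈ P) (hA' : A' ⊆ A) (hB' : B' ⊆ B)
    (hA'n : A'.Nonempty) (hB'n : B'.Nonempty) (hd : Disjoint A B) :
    s(A', B') ∈ P :=
  hds _ _ ⟨A', B', rfl, hA'n, hB'n, hd.mono hA' hB'⟩ h ⟨A', B', A, B, rfl, rfl, hA', hB'⟩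

lemma inst_rep {N : ℕ} {m : MI N} (h : IsMIInst m) {A B : PSet N} (hm : m = s(A, B)) :
    A.Nonempty ∧ B.Nonempty ∧ Disjoint A B := by
  obtain ⟨A₀, B₀, hm₀, hA₀, hB₀, hd₀⟩ := h
  have heq := hm.symm.trans hm₀
  rcases Sym2.eq_iff.mp heq with ⟨h1, h2⟩ | ⟨h1, h2⟩ <;> subst h1 <;> subst h2
  · exact ⟨hA₀, hB₀, hd₀⟩
  · exact ⟨hB₀, hA₀, hd₀.symm⟩

lemma I_split {N : ℕ} (v : EntropyVec N) {A B C D : PSet N}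
    (hCD : Disjoint C D) (hX : A ∪ B = C ∪ D) :
    v.I A B = v.I (C ∩ A) (C ∩ B) + v.I (D ∩ A) (D ∩ B) + v.I C D
      - v.I (C ∩ A) (D ∩ A) - v.I (C ∩ B) (D ∩ B) := by
  have h1 : (C ∩ A) ∪ (C ∩ B) = C := by
    rw [← Finset.inter_union_distrib_left, hX]
    exact Finset.inter_eq_left.mpr Finset.subset_union_left
  have h2 : (D ∩ A) ∪ (D ∩ B) = D := by
    rw [← Finset.inter_union_distrib_left, hX]
    exact Finset.inter_eq_left.mpr Finset.subset_union_right
  have h3 : (C ∩ A) ∪ (D ∩ A) = A := by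
    rw [← Finset.union_inter_distrib_right, ← hX]
    exact Finset.inter_eq_right.mpr Finset.subset_union_left
  have h4 : (C ∩ B) ∪ (D ∩ B) = B := by
    rw [← Finset.union_inter_distrib_right, ← hX]
    exact Finset.inter_eq_right.mpr Finset.subset_union_right
  unfold EntropyVec.I
  rw [h1, h2, h3, h4, hX]
  ring

/-- Descent lemma: below any instance outside `P` there is an instance
whose β-set is positive. -/
lemma descent {N : ℕ} {P : Set (MI N)} {v : EntropyVec N}
    (hv : v.InSAC) (hPv : P = v.PMI) (hds : IsMIDownSet P) :
    ∀ n : ℕ, ∀ A B : PSet N, (A ∪ B).card < n → A.Nonempty → B.Nonempty →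
      Disjoint A B → s(A, B) ∉ P →
      ∃ A' B' : PSet N, A' ⊆ A ∧ B' ⊆ B ∧ A'.Nonempty ∧ B'.Nonempty ∧
        Disjoint A' B' ∧ BPos P (A' ∪ B') := by
  intro n
  induction n with
  | zero => intro A B h; exact absurd h (Nat.not_lt_zero _)
  | succ n ih =>
    intro A B hcard hA hB hAB hnP
    by_cases hpos : BPos P (A ∪ B)
    · exact ⟨A, B, subset_rfl, subset_rfl, hA, hB, hAB, hpos⟩
    · rw [BPos] at hpos; push_neg at hpos
      obtain ⟨m, hmβ, hmP⟩ := hpos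
      obtain ⟨C, D, rfl, hC, hD, hCD, hU⟩ := hmβ
      have hICD : v.I C D = 0 := (mem_P_iff hPv hC hD hCD).mp hmP
      have hz1 : v.I (C ∩ A) (D ∩ A) = 0 := by
        rcases (C ∩ A).eq_empty_or_nonempty with h | h
        · rw [h, I_empty_left]
        rcases (D ∩ A).eq_empty_or_nonempty with h' | h'
        · rw [h', I_empty_right]
        exact (mem_P_iff hPv h h'
            (hCD.mono Finset.inter_subset_left Finset.inter_subset_left)).mp
          (mem_P_down hds hmP Finset.inter_subset_left Finset.inter_subset_left h h' hCD)
      have hz2 : v.I (C ∩ B) (D ∩ B) = 0 := by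
        rcases (C ∩ B).eq_empty_or_nonempty with h | h
        · rw [h, I_empty_left]
        rcases (D ∩ B).eq_empty_or_nonempty with h' | h'
        · rw [h', I_empty_right]
        exact (mem_P_iff hPv h h'
            (hCD.mono Finset.inter_subset_left Finset.inter_subset_left)).mp
          (mem_P_down hds hmP Finset.inter_subset_left Finset.inter_subset_left h h' hCD)
      have hIAB : 0 < v.I A B := (not_mem_P_iff hv hPv hA hB hAB).mp hnP
      have key : v.I A B = v.I (C ∩ A) (C ∩ B) + v.I (D ∩ A) (D ∩ B) := by
        rw [I_split v hCD hU.symm, hICD, hz1, hz2]; ring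
      have hdC : Disjoint (C ∩ A) (C ∩ B) :=
        hAB.mono Finset.inter_subset_right Finset.inter_subset_right
      have hdD : Disjoint (D ∩ A) (D ∩ B) :=
        hAB.mono Finset.inter_subset_right Finset.inter_subset_right
      have hn1 := I_nonneg hv hdC
      have hn2 := I_nonneg hv hdD
      have hcase : 0 < v.I (C ∩ A) (C ∩ B) ∨ 0 < v.I (D ∩ A) (D ∩ B) := by
        by_contra h; push_neg at h; linarith [h.1, h.2]
      rcases hcase with hpos' | hpos'
      · have hCAne : (C ∩ A).Nonempty := by
          rcases (C ∩ A).eq_empty_or_nonempty with h | h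
          · rw [h, I_empty_left] at hpos'; linarith
          · exact h
        have hCBne : (C ∩ B).Nonempty := by
          rcases (C ∩ B).eq_empty_or_nonempty with h | h
          · rw [h, I_empty_right] at hpos'; linarith
          · exact h
        have hnotP : s(C ∩ A, C ∩ B) ∉ P :=
          (not_mem_P_iff hv hPv hCAne hCBne hdC).mpr hpos'
        have hCU : (C ∩ A) ∪ (C ∩ B) = C := by
          rw [← Finset.inter_union_distrib_left]
          exact Finset.inter_eq_left.mpr (hU ▸ Finset.subset_union_left)
        have hClt : C.card < (A ∪ B).card := by
          apply Finset.card_lt_card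
          refine (Finset.ssubset_iff_of_subset (hU ▸ Finset.subset_union_left)).mpr ?_
          obtain ⟨d, hd⟩ := hD
          exact ⟨d, hU ▸ Finset.mem_union_right _ hd, Finset.disjoint_right.mp hCD hd⟩
        obtain ⟨A', B', hs1, hs2, h3, h4, h5, h6⟩ :=
          ih (C ∩ A) (C ∩ B) (by rw [hCU]; omega) hCAne hCBne hdC hnotP
        exact ⟨A', B', hs1.trans Finset.inter_subset_right,
          hs2.trans Finset.inter_subset_right, h3, h4, h5, h6⟩
      · have hDAne : (D ∩ A).Nonempty := by
          rcases (D ∩ A).eq_empty_or_nonempty with h | h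
          · rw [h, I_empty_left] at hpos'; linarith
          · exact h
        have hDBne : (D ∩ B).Nonempty := by
          rcases (D ∩ B).eq_empty_or_nonempty with h | h
          · rw [h, I_empty_right] at hpos'; linarith
          · exact h
        have hnotP : s(D ∩ A, D ∩ B) ∉ P :=
          (not_mem_P_iff hv hPv hDAne hDBne hdD).mpr hpos'
        have hDU : (D ∩ A) ∪ (D ∩ B) = D := by
          rw [← Finset.inter_union_distrib_left]
          exact Finset.inter_eq_left.mpr (hU ▸ Finset.subset_union_right)
        have hDlt : D.card < (A ∪ B).card := by
          apply Finset.card_lt_card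
          refine (Finset.ssubset_iff_of_subset (hU ▸ Finset.subset_union_right)).mpr ?_
          obtain ⟨c, hc⟩ := hC
          exact ⟨c, hU ▸ Finset.mem_union_left _ hc, Finset.disjoint_left.mp hCD hc⟩
        obtain ⟨A', B', hs1, hs2, h3, h4, h5, h6⟩ :=
          ih (D ∩ A) (D ∩ B) (by rw [hDU]; omega) hDAne hDBne hdD hnotP
        exact ⟨A', B', hs1.trans Finset.inter_subset_right,
          hs2.trans Finset.inter_subset_right, h3, h4, h5, h6⟩

/-- Crossing lemma: a path from `A` to `B` must use an edge meeting both. -/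
lemma path_cross {N : ℕ} {E : Set (PSet N)} {A B Y : PSet N}
    (hE : ∀ e ∈ E, e ⊆ Y) (hU : A ∪ B = Y) (hd : Disjoint A B)
    {a b : Party N} (ha : a ∈ A) (hb : b ∈ B)
    (h : Relation.ReflTransGen (hStep E) a b) :
    ∃ Z ∈ E, (Z ∩ A).Nonempty ∧ (Z ∩ B).Nonempty := by
  have key : ∀ c, Relation.ReflTransGen (hStep E) a c →
      c ∈ A ∨ ∃ Z ∈ E, (Z ∩ A).Nonempty ∧ (Z ∩ B).Nonempty := by
    intro c hc
    induction hc with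
    | refl => exact Or.inl ha
    | @tail c' c h1 h2 ih =>
      rcases ih with hcA | done
      · obtain ⟨e, heE, hce, hde⟩ := h2
        have hcY : c ∈ Y := hE e heE hde
        rw [← hU] at hcY
        rcases Finset.mem_union.mp hcY with h' | h'
        · exact Or.inl h'
        · exact Or.inr ⟨e, heE, ⟨c', Finset.mem_inter.mpr ⟨hce, hcA⟩⟩,
            ⟨c, Finset.mem_inter.mpr ⟨hde, h'⟩⟩⟩
      · exact Or.inr done
  rcases key b h with hbA | done
  · exact absurd hbA (Finset.disjoint_right.mp hd hb)
  · exact done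

/-- For every KC-PMI `P` and subsystem `Y` with `|Y| ≥ 2`: `β(Y)` is
positive and non-essential iff `|Y| > 2` and the sub-hypergraph `H_Y` of the
correlation hypergraph `H_P` is connected. -/
theorem statement13 {N : ℕ} (hN : 2 ≤ N) (P : Set (MI N)) (hP : IsKCPMI P)
    (Y : PSet N) (hY : 2 ≤ Y.card) :
    (BPos P Y ∧ BNEss P Y) ↔ (2 < Y.card ∧ hConn Y (subEdges P Y)) := by
  classical
  obtain ⟨⟨v, hv, hPv⟩, hds⟩ := hP
  constructor
  · rintro ⟨hpos, hness⟩
    constructor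
    · -- `2 < Y.card`
      rcases lt_or_eq_of_le hY with h | h
      · exact h
      exfalso
      obtain ⟨x, y, hxy, hYxy⟩ := Finset.card_eq_two.mp h.symm
      have hdxy : Disjoint ({x} : PSet N) {y} := by
        simp only [Finset.disjoint_singleton]; exact hxy
      have hUxy : ({x} : PSet N) ∪ {y} = Y := by
        rw [hYxy]; ext z; simp
      have hmβ : s(({x} : PSet N), ({y} : PSet N)) ∈ betaSet Y :=
        ⟨{x}, {y}, rfl, Finset.singleton_nonempty x, Finset.singleton_nonempty y,
          hdxy, hUxy⟩
      refine hness _ hmβ ⟨⟨{x}, {y}, rfl, Finset.singleton_nonempty x,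
        Finset.singleton_nonempty y, hdxy⟩, hpos _ hmβ, ?_⟩
      intro m' hm' hm'P hle
      obtain ⟨A, B, C, D, hm'eq, hmeq, h1, h2⟩ := hle
      obtain ⟨hAne, hBne, -⟩ := inst_rep hm' hm'eq
      rcases Sym2.eq_iff.mp hmeq.symm with ⟨hc, hd⟩ | ⟨hc, hd⟩ <;> subst hc <;> subst hd
      · have hA : A = {x} := by
          rcases Finset.subset_singleton_iff.mp h1 with h | h
          · exact absurd h hAne.ne_empty
          · exact h
        have hB : B = {y} := by
          rcases Finset.subset_singleton_iff.mp h2 with h | h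
          · exact absurd h hBne.ne_empty
          · exact h
        rw [hm'eq, hA, hB]
      · have hA : A = {y} := by
          rcases Finset.subset_singleton_iff.mp h1 with h | h
          · exact absurd h hAne.ne_empty
          · exact h
        have hB : B = {x} := by
          rcases Finset.subset_singleton_iff.mp h2 with h | h
          · exact absurd h hBne.ne_empty
          · exact h
        rw [hm'eq, hA, hB, Sym2.eq_swap]
    · -- connectivity
      intro a ha b hb
      by_contra hnr
      set E := subEdges P Y with hE
      set A := Y.filter (fun c => Relation.ReflTransGen (hStep E) a c) with hAdef
      have haA : a ∈ A := Finset.mem_filter.mpr ⟨ha, Relation.ReflTransGen.refl⟩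
      set B := Y \ A with hBdef
      have hbB : b ∈ B :=
        Finset.mem_sdiff.mpr ⟨hb, fun h => hnr (Finset.mem_filter.mp h).2⟩
      have hAB : Disjoint A B := Finset.disjoint_sdiff
      have hUAB : A ∪ B = Y := Finset.union_sdiff_of_subset (Finset.filter_subset _ _)
      have hmβ : s(A, B) ∈ betaSet Y := ⟨A, B, rfl, ⟨a, haA⟩, ⟨b, hbB⟩, hAB, hUAB⟩
      have hmP : s(A, B) ∉ P := hpos _ hmβ
      have hinst : IsMIInst (s(A, B)) := ⟨A, B, rfl, ⟨a, haA⟩, ⟨b, hbB⟩, hAB⟩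
      have hex : ∃ m', IsMIInst m' ∧ m' ∉ P ∧ MIle m' (s(A, B)) ∧ m' ≠ s(A, B) := by
        by_contra h; push_neg at h
        exact hness _ hmβ ⟨hinst, hmP, fun m' h1 h2 h3 => h m' h1 h2 h3⟩
      obtain ⟨m', hinst', hnP', hle', hne'⟩ := hex
      obtain ⟨A₁, B₁, C, D, hm'eq, hmeq, h1, h2⟩ := hle'
      obtain ⟨A₂, B₂, hm2, hA2, hB2⟩ :
          ∃ A₂ B₂, m' = s(A₂, B₂) ∧ A₂ ⊆ A ∧ B₂ ⊆ B := by
        rcases Sym2.eq_iff.mp hmeq.symm with ⟨hc, hd⟩ | ⟨hc, hd⟩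
        · exact ⟨A₁, B₁, hm'eq, hc ▸ h1, hd ▸ h2⟩
        · exact ⟨B₁, A₁, hm'eq.trans Sym2.eq_swap, hd ▸ h2, hc ▸ h1⟩
      obtain ⟨hA₂ne, hB₂ne, hd₂⟩ := inst_rep hinst' hm2
      obtain ⟨A', B', hsA', hsB', hA'ne, hB'ne, hd', hbpos⟩ :=
        descent hv hPv hds ((A₂ ∪ B₂).card + 1) A₂ B₂ (Nat.lt_succ_self _)
          hA₂ne hB₂ne hd₂ (hm2 ▸ hnP')
      have hA'A : A' ⊆ A := hsA'.trans hA2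
      have hB'B : B' ⊆ B := hsB'.trans hB2
      have hZY : A' ∪ B' ⊆ Y := hUAB ▸ Finset.union_subset_union hA'A hB'B
      have hZne : A' ∪ B' ≠ Y := by
        intro hZ
        apply hne'
        have hAA' : A = A' := by
          apply Finset.Subset.antisymm _ hA'A
          intro x hx
          have : x ∈ A' ∪ B' := by rw [hZ, ← hUAB]; exact Finset.mem_union_left _ hx
          rcases Finset.mem_union.mp this with h | h
          · exact h
          · exact absurd hx (Finset.disjoint_right.mp hAB (hB'B h))
        have hBB' : B = B' := by
          apply Finset.Subset.antisymm _ hB'B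
          intro x hx
          have : x ∈ A' ∪ B' := by rw [hZ, ← hUAB]; exact Finset.mem_union_right _ hx
          rcases Finset.mem_union.mp this with h | h
          · exact absurd hx (Finset.disjoint_left.mp hAB (hA'A h))
          · exact h
        have hAA₂' : A₂ = A := Finset.Subset.antisymm hA2 (by rw [hAA']; exact hsA')
        have hBB₂ : B₂ = B := Finset.Subset.antisymm hB2 (by rw [hBB']; exact hsB')
        rw [hm2, hAA₂', hBB₂]
      obtain ⟨a', ha'⟩ := hA'ne
      obtain ⟨b', hb'⟩ := hB'ne
      have hcard2 : 2 ≤ (A' ∪ B').card := by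
        rw [Nat.succ_le_iff, Finset.one_lt_card]
        exact ⟨a', Finset.mem_union_left _ ha', b', Finset.mem_union_right _ hb',
          fun h => Finset.disjoint_left.mp hd' ha' (h ▸ hb')⟩
      have hZE : A' ∪ B' ∈ E := ⟨Finset.ssubset_iff_subset_ne.mpr ⟨hZY, hZne⟩, hcard2, hbpos⟩
      have hreach : Relation.ReflTransGen (hStep E) a b' :=
        Relation.ReflTransGen.tail (Finset.mem_filter.mp (hA'A ha')).2
          ⟨A' ∪ B', hZE, Finset.mem_union_left _ ha', Finset.mem_union_right _ hb'⟩
      have hb'B : b' ∈ B := hB'B hb'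
      exact (Finset.mem_sdiff.mp hb'B).2
        (Finset.mem_filter.mpr ⟨(Finset.mem_sdiff.mp hb'B).1, hreach⟩)
  · rintro ⟨-, hconn⟩
    have hEY : ∀ e ∈ subEdges P Y, e ⊆ Y := fun e he => he.1.subset
    have cross : ∀ A B : PSet N, Disjoint A B → A ∪ B = Y → A.Nonempty → B.Nonempty →
        ∃ Z ∈ subEdges P Y, (Z ∩ A).Nonempty ∧ (Z ∩ B).Nonempty := by
      intro A B hd hU hA hB
      obtain ⟨a, ha⟩ := hA
      obtain ⟨b, hb⟩ := hB
      exact path_cross hEY hU hd ha hb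
        (hconn a (hU ▸ Finset.mem_union_left _ ha) b (hU ▸ Finset.mem_union_right _ hb))
    have key : ∀ m ∈ betaSet Y, m ∉ P ∧ m ∉ minimalMI P := by
      intro m hm
      obtain ⟨A, B, rfl, hA, hB, hd, hU⟩ := hm
      obtain ⟨Z, hZE, hZA, hZB⟩ := cross A B hd hU hA hB
      have hZU : (Z ∩ A) ∪ (Z ∩ B) = Z := by
        rw [← Finset.inter_union_distrib_left, hU]
        exact Finset.inter_eq_left.mpr hZE.1.subset
      have hm'β : s(Z ∩ A, Z ∩ B) ∈ betaSet Z :=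
        ⟨Z ∩ A, Z ∩ B, rfl, hZA, hZB,
          hd.mono Finset.inter_subset_right Finset.inter_subset_right, hZU⟩
      have hm'nP : s(Z ∩ A, Z ∩ B) ∉ P := hZE.2.2 _ hm'β
      have hmnP : s(A, B) ∉ P := by
        intro hmem
        exact hm'nP (mem_P_down hds hmem Finset.inter_subset_right
          Finset.inter_subset_right hZA hZB hd)
      refine ⟨hmnP, ?_⟩
      intro hmin
      have heq := hmin.2.2 (s(Z ∩ A, Z ∩ B))
        ⟨Z ∩ A, Z ∩ B, rfl, hZA, hZB,
          hd.mono Finset.inter_subset_right Finset.inter_subset_right⟩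
        hm'nP ⟨Z ∩ A, Z ∩ B, A, B, rfl, rfl,
          Finset.inter_subset_right, Finset.inter_subset_right⟩
      have hYZ : Y ⊆ Z := by
        rcases Sym2.eq_iff.mp heq with ⟨hc, hd'⟩ | ⟨hc, hd'⟩
        · rw [← hU]
          exact Finset.union_subset (hc ▸ Finset.inter_subset_left)
            (hd' ▸ Finset.inter_subset_left)
        · rw [← hU]
          exact Finset.union_subset (hd' ▸ Finset.inter_subset_left)
            (hc ▸ Finset.inter_subset_left)
      exact hZE.1.not_subset hYZ
    exact ⟨fun m hm => (key m hm).1, fun m hm => (key m hm).2⟩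

end HEC
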